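/- All eight roots of the polynomial P₈(α) = 30α⁸ + 36α⁷ + 133α⁶ + 114α⁵ + 214α⁴ + 114α³ + 133α² + 36α + 30 have modulus different from 1; in particular P₈ has no root that is a root of unity. -/

import Mathlib

/-- All roots of `P₈(α) = 30α⁸+36α⁷+133α⁶+114α⁵+214α⁴+114α³+133α²+36α+30`
have modulus different from 1; in particular no root of `P₈` is a root of
unity. -/
theorem stmt_16 :
    (∀ α : ℂ,
      30 * α ^ 8 + 36 * α ^ 7 + 133 * α ^ 6 + 114 * α ^ 5 + 214 * α ^ 4 +
          114 * α ^ 3 + 133 * α ^ 2 + 36 * α + 30 = 0 →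
      ‖α‖ ≠ 1) ∧
    ∀ α : ℂ, (∃ n : ℕ, 0 < n ∧ α ^ n = 1) →
      30 * α ^ 8 + 36 * α ^ 7 + 133 * α ^ 6 + 114 * α ^ 5 + 214 * α ^ 4 +
          114 * α ^ 3 + 133 * α ^ 2 + 36 * α + 30 ≠ 0 := by
  have main : ∀ α : ℂ,
      30 * α ^ 8 + 36 * α ^ 7 + 133 * α ^ 6 + 114 * α ^ 5 + 214 * α ^ 4 +
          114 * α ^ 3 + 133 * α ^ 2 + 36 * α + 30 = 0 →
      ‖α‖ ≠ 1 := by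
    intro α hP habs
    set c := (starRingEnd ℂ) α with hc
    have hnorm : α * c = 1 := by
      rw [hc, Complex.mul_conj]
      norm_cast
      rw [Complex.normSq_eq_norm_sq, habs]; norm_num
    have ht : α + c = ((2 * α.re : ℝ) : ℂ) := by
      rw [hc, Complex.add_conj]
    set t : ℝ := 2 * α.re with htdef
    have key : (30 * (t:ℂ) ^ 4 + 36 * (t:ℂ) ^ 3 + 13 * (t:ℂ) ^ 2 + 6 * (t:ℂ) + 8)
        * α ^ 4 = 0 := by
      rw [← ht]
      linear_combination hP + (120 * α^6 + 180 * α^5 * c + 108 * α^5 + 120 * α^4 * c^2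
        + 108 * α^4 * c + 206 * α^4 + 30 * α^3 * c^3 + 36 * α^3 * c^2 + 133 * α^3 * c
        + 114 * α^3 + 30 * α^2 * c^2 + 36 * α^2 * c + 133 * α^2 + 30 * α * c + 36 * α
        + 30) * hnorm
    have hα0 : α ≠ 0 := by
      intro h; rw [h] at hP; norm_num at hP
    have h4 : α ^ 4 ≠ 0 := pow_ne_zero _ hα0
    have keyC : 30 * (t:ℂ) ^ 4 + 36 * (t:ℂ) ^ 3 + 13 * (t:ℂ) ^ 2 + 6 * (t:ℂ) + 8 = 0 :=
      (mul_eq_zero.mp key).resolve_right h4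
    have keyR : 30 * t ^ 4 + 36 * t ^ 3 + 13 * t ^ 2 + 6 * t + 8 = 0 := by
      exact_mod_cast keyC
    nlinarith [sq_nonneg (t*t + t), sq_nonneg (t*t - t), sq_nonneg (t + 1), sq_nonneg t,
      sq_nonneg (t*t), sq_nonneg (t*t + 2*t), sq_nonneg (5*t + 3)]
  refine ⟨main, ?_⟩
  rintro α ⟨n, hn, hpow⟩ hP
  apply main α hP
  have h1 : ‖α‖ ^ n = 1 := by
    rw [← norm_pow, hpow, norm_one]
  have h0 : 0 ≤ ‖α‖ := norm_nonneg α
  rcases lt_trichotomy (‖α‖) 1 with h | h | h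
  · have := pow_lt_one₀ h0 h hn.ne'
    linarith
  · exact h
  · have := one_lt_pow₀ h hn.ne'
    linarith
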